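/- Every k-chordal graph has treelength at most k. In particular, a graph with no induced cycle of length at least k+1 admits a tree decomposition in which any two vertices sharing a bag are at distance at most k. -/

import Mathlib

/-- A graph is `k`-chordal if it has no induced cycle of length at least `k+1`. -/
def IsKChordal {V : Type*} (G : SimpleGraph V) (k : ℕ) : Prop :=
  ∀ (a : V) (c : G.Walk a a), c.IsCycle →
    (∀ u ∈ c.support, ∀ v ∈ c.support, G.Adj u v → s(u, v) ∈ c.edges) →
    c.length ≤ k

section TreelengthProof

open SimpleGraph Walk


variable {V : Type} {G : SimpleGraph V}

/-- A walk of length 1 witnesses adjacency of its endpoints, and its edge list. -/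
lemma adj_of_len_one {u v : V} {p : G.Walk u v} (h : p.length = 1) :
    G.Adj u v ∧ p.edges = [s(u, v)] := by
  cases p with
  | nil => simp at h
  | cons hadj q =>
    simp only [Walk.length_cons, Nat.add_right_cancel_iff] at h
    have h0 : q.length = 0 := by omega
    have := Walk.eq_of_length_eq_zero h0
    subst this
    have : q = Walk.nil := by
      cases q with
      | nil => rfl
      | cons h' q' => simp at h0
    subst this
    simp [hadj]

/-- Concatenating a fresh vertex to a path gives a path. -/
lemma IsPath.concat' {u v w : V} {p : G.Walk u v} (hp : p.IsPath) (h : G.Adj v w)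
    (hw : w ∉ p.support) : (p.concat h).IsPath := by
  rw [Walk.isPath_def, Walk.support_concat]
  rw [Walk.isPath_def] at hp
  simp only [List.concat_eq_append, List.nodup_append, hp, List.nodup_singleton, true_and]
  simp [hw, List.disjoint_singleton]
  intro a ha hax; exact hw (hax ▸ ha)

/-- Walks inside a set of vertices. -/
def InW (G : SimpleGraph V) (s : Set V) (u v : V) : Prop :=
  ∃ p : G.Walk u v, ∀ x ∈ p.support, x ∈ s

lemma InW.left_mem {s : Set V} {u v : V} (h : InW G s u v) : u ∈ s := by
  obtain ⟨p, hp⟩ := h; exact hp u p.start_mem_support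

lemma InW.right_mem {s : Set V} {u v : V} (h : InW G s u v) : v ∈ s := by
  obtain ⟨p, hp⟩ := h; exact hp v p.end_mem_support

lemma InW.refl {s : Set V} {u : V} (h : u ∈ s) : InW G s u u :=
  ⟨Walk.nil, by simpa⟩

lemma InW.symm {s : Set V} {u v : V} (h : InW G s u v) : InW G s v u := by
  obtain ⟨p, hp⟩ := h
  exact ⟨p.reverse, by simpa [Walk.support_reverse] using hp⟩

lemma InW.trans {s : Set V} {u v w : V} (h : InW G s u v) (h' : InW G s v w) :
    InW G s u w := by
  obtain ⟨p, hp⟩ := h; obtain ⟨q, hq⟩ := h'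
  refine ⟨p.append q, ?_⟩
  intro x hx
  rcases (Walk.mem_support_append_iff _ _).1 hx with h | h
  · exact hp x h
  · exact hq x h

lemma InW.mono {s t : Set V} (hst : s ⊆ t) {u v : V} (h : InW G s u v) : InW G t u v := by
  obtain ⟨p, hp⟩ := h; exact ⟨p, fun x hx => hst (hp x hx)⟩

lemma InW.adj {s : Set V} {u v : V} (h : G.Adj u v) (hu : u ∈ s) (hv : v ∈ s) :
    InW G s u v := by
  refine ⟨Walk.cons h Walk.nil, ?_⟩
  intro x hx
  simp only [Walk.support_cons, Walk.support_nil, List.mem_cons, List.mem_singleton] at hx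
  rcases hx with rfl | rfl | h
  · exact hu
  · exact hv
  · simp at h

/-- Existence of a minimal-length walk inside a set. -/
lemma InW.exists_min {s : Set V} {u v : V} (h : InW G s u v) :
    ∃ p : G.Walk u v, (∀ x ∈ p.support, x ∈ s) ∧ p.IsPath ∧
      ∀ q : G.Walk u v, (∀ x ∈ q.support, x ∈ s) → p.length ≤ q.length := by
  classical
  have hne : ∃ n, ∃ p : G.Walk u v, (∀ x ∈ p.support, x ∈ s) ∧ p.length = n := by
    obtain ⟨p, hp⟩ := h; exact ⟨p.length, p, hp, rfl⟩
  obtain ⟨p, hp, hlen⟩ := Nat.find_spec hne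
  have hmin : ∀ q : G.Walk u v, (∀ x ∈ q.support, x ∈ s) → p.length ≤ q.length := by
    intro q hq
    rw [hlen]
    exact Nat.find_le ⟨q, hq, rfl⟩
  -- replace p by its bypass to get a path
  refine ⟨p.bypass, fun x hx => hp x (p.support_bypass_subset hx), p.bypass_isPath, ?_⟩
  intro q hq
  exact le_trans p.length_bypass_le (hmin q hq)


/-- A minimal-length walk inside a set is an induced (chord-free) path. -/
lemma chordfree {s : Set V} :
    ∀ {x y : V} (p : G.Walk x y), (∀ z ∈ p.support, z ∈ s) →
      (∀ q : G.Walk x y, (∀ z ∈ q.support, z ∈ s) → p.length ≤ q.length) →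
      ∀ {a b : V}, a ∈ p.support → b ∈ p.support → G.Adj a b → s(a, b) ∈ p.edges := by
  classical
  intro x y p
  induction p with
  | nil =>
    intro _ _ a b ha hb hab
    simp only [Walk.support_nil, List.mem_singleton] at ha hb
    subst ha; subst hb
    exact absurd hab (G.irrefl)
  | @cons x w y hxw q ih =>
    intro hp hmin a b ha hb hab
    have hxs : x ∈ s := hp x (Walk.start_mem_support _)
    have hqs : ∀ z ∈ q.support, z ∈ s := fun z hz => hp z (by simp [Walk.support_cons, hz])
    have hqmin : ∀ q' : G.Walk w y, (∀ z ∈ q'.support, z ∈ s) → q.length ≤ q'.length := by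
      intro q' hq'
      have := hmin (Walk.cons hxw q') (by
        intro z hz
        simp only [Walk.support_cons, List.mem_cons] at hz
        rcases hz with rfl | hz
        · exact hxs
        · exact hq' z hz)
      simpa using this
    simp only [Walk.support_cons, List.mem_cons] at ha hb
    -- key shortcut construction
    have key : ∀ {b : V}, b ∈ q.support → G.Adj x b → s(x, b) ∈ (Walk.cons hxw q).edges := by
      intro b hb hxb
      by_cases hbw : b = w
      · subst hbw; simp
      · exfalso
        have hq' : ∀ z ∈ (q.dropUntil b hb).support, z ∈ s :=
          fun z hz => hqs z (q.support_dropUntil_subset hb hz)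
        have hlen := hmin (Walk.cons hxb (q.dropUntil b hb)) (by
          intro z hz
          simp only [Walk.support_cons, List.mem_cons] at hz
          rcases hz with rfl | hz
          · exact hxs
          · exact hq' z hz)
        simp only [Walk.length_cons, add_le_add_iff_right] at hlen
        have hsplit : (q.takeUntil b hb).length + (q.dropUntil b hb).length = q.length := by
          have := congrArg Walk.length (q.take_spec hb)
          rwa [Walk.length_append] at this
        have htz : (q.takeUntil b hb).length = 0 := by omega
        exact hbw (Walk.eq_of_length_eq_zero htz).symm
    rcases ha with rfl | ha
    · -- a = x
      rcases hb with rfl | hb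
      · exact absurd hab (G.irrefl)
      · exact key hb hab
    · rcases hb with rfl | hb
      · -- b = x
        rw [Sym2.eq_swap]
        exact key ha hab.symm
      · have := ih hqs hqmin ha hb hab
        simp [Walk.edges_cons, this]

/-- Split a walk at the first vertex satisfying a predicate. -/
lemma exists_first_split {P : V → Prop} :
    ∀ {x y : V} (p : G.Walk x y), (∃ z ∈ p.support, P z) →
      ∃ (m : V) (p₁ : G.Walk x m) (p₂ : G.Walk m y),
        p = p₁.append p₂ ∧ P m ∧ ∀ z ∈ p₁.support, P z → z = m := by
  intro x y p
  induction p with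
  | nil =>
    intro h
    obtain ⟨z, hz, hPz⟩ := h
    simp only [Walk.support_nil, List.mem_singleton] at hz
    subst hz
    exact ⟨z, Walk.nil, Walk.nil, rfl, hPz, by simp⟩
  | @cons x w y hxw q ih =>
    intro h
    by_cases hPx : P x
    · exact ⟨x, Walk.nil, Walk.cons hxw q, rfl, hPx, by simp⟩
    · obtain ⟨z, hz, hPz⟩ := h
      simp only [Walk.support_cons, List.mem_cons] at hz
      rcases hz with rfl | hz
      · exact absurd hPz hPx
      · obtain ⟨m, p₁, p₂, heq, hPm, hfirst⟩ := ih ⟨z, hz, hPz⟩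
        refine ⟨m, Walk.cons hxw p₁, p₂, by simp [heq], hPm, ?_⟩
        intro z' hz' hPz'
        simp only [Walk.support_cons, List.mem_cons] at hz'
        rcases hz' with rfl | hz'
        · exact absurd hPz' hPx
        · exact hfirst z' hz' hPz'

/-- Gluing two internally-disjoint paths between non-adjacent distinct vertices
gives a cycle. -/
lemma glue_isCycle {x y : V} {p q : G.Walk x y} (hp : p.IsPath) (hq : q.IsPath)
    (hxy : x ≠ y) (hnadj : ¬G.Adj x y)
    (hdisj : ∀ z, z ∈ p.support → z ∈ q.support → z = x ∨ z = y) :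
    (p.append q.reverse).IsCycle := by
  have hpl : 2 ≤ p.length := by
    rcases Nat.lt_or_ge p.length 2 with h | h
    · interval_cases hpl : p.length
      · exact absurd (Walk.eq_of_length_eq_zero hpl) hxy
      · exact absurd (adj_of_len_one hpl).1 hnadj
    · exact h
  have hql : 2 ≤ q.length := by
    rcases Nat.lt_or_ge q.length 2 with h | h
    · interval_cases hql : q.length
      · exact absurd (Walk.eq_of_length_eq_zero hql) hxy
      · exact absurd (adj_of_len_one hql).1 hnadj
    · exact h
  rw [Walk.isCycle_def]
  refine ⟨?_, ?_, ?_⟩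
  · -- trail: edges nodup
    rw [Walk.isTrail_def, Walk.edges_append, Walk.edges_reverse]
    rw [List.nodup_append]
    refine ⟨hp.isTrail.edges_nodup, by simpa using hq.isTrail.edges_nodup, ?_⟩
    intro e hep e' heq' hee
    subst hee
    have heq : e ∈ q.edges := by simpa using heq'
    induction e with
    | h a b =>
      have hap : a ∈ p.support := p.fst_mem_support_of_mem_edges hep
      have hbp : b ∈ p.support := p.snd_mem_support_of_mem_edges hep
      have haq : a ∈ q.support := q.fst_mem_support_of_mem_edges heq
      have hbq : b ∈ q.support := q.snd_mem_support_of_mem_edges heq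
      have hab : G.Adj a b := p.adj_of_mem_edges hep
      rcases hdisj a hap haq with rfl | rfl <;> rcases hdisj b hbp hbq with rfl | rfl
      · exact G.irrefl hab
      · exact hnadj hab
      · exact hnadj hab.symm
      · exact G.irrefl hab
  · -- nonempty
    intro hnil
    have := congrArg Walk.length hnil
    simp only [Walk.length_append, Walk.length_reverse, Walk.length_nil] at this
    omega
  · -- support tail nodup
    rw [Walk.support_append]
    rw [p.support_eq_cons, List.cons_append, List.tail_cons, List.nodup_append]
    have hps := hp.support_nodup
    have hqrev : q.reverse.support.Nodup := by
      rw [Walk.support_reverse, List.nodup_reverse]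
      exact hq.support_nodup
    refine ⟨?_, ?_, ?_⟩
    · rw [p.support_eq_cons] at hps
      exact hps.of_cons
    · exact hqrev.tail
    · intro z hzp z' hzq hzz
      subst hzz
      have hzp' : z ∈ p.support := by rw [p.support_eq_cons]; exact List.mem_cons_of_mem _ hzp
      have hzq' : z ∈ q.support := by
        have : z ∈ q.reverse.support := List.mem_of_mem_tail hzq
        rwa [Walk.support_reverse, List.mem_reverse] at this
      rcases hdisj z hzp' hzq' with rfl | rfl
      · rw [p.support_eq_cons] at hps
        exact (List.nodup_cons.mp hps).1 hzp
      · have : q.reverse.support = z :: q.reverse.support.tail := q.reverse.support_eq_cons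
        have hnd := hqrev
        rw [this] at hnd
        exact (List.nodup_cons.mp hnd).1 hzq

/-- If some hub in `s` is adjacent (in `T`) to every other element of `s`,
the induced subgraph is connected. -/
lemma induce_connected_of_hub {ι : Type} (T : SimpleGraph ι) (s : Set ι) (h₀ : ι)
    (hh : h₀ ∈ s) (hhub : ∀ t ∈ s, t = h₀ ∨ T.Adj t h₀) :
    (T.induce s).Connected := by
  rw [SimpleGraph.connected_iff]
  constructor
  · intro a b
    have key : ∀ c : s, (T.induce s).Reachable c ⟨h₀, hh⟩ := by
      intro c
      rcases hhub c.1 c.2 with hc | hc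
      · exact SimpleGraph.Reachable.refl _ |>.mono (le_refl _) |>.mono (le_refl _) |>.trans
          (by rw [show c = (⟨h₀, hh⟩ : s) from Subtype.ext hc])
      · exact SimpleGraph.Adj.reachable (by simpa using hc)
    exact (key a).trans (key b).symm
  · exact ⟨⟨h₀, hh⟩⟩

section Levels

variable (G) (r : V)

/-- Depth of a vertex. -/
noncomputable def lvl (v : V) : ℕ := G.dist r v

/-- Vertices of depth at least `i`. -/
def Si (i : ℕ) : Set V := {v | i ≤ lvl G r v}

variable {G r}
variable (hG : G.Connected)
include hG

omit hG in
lemma lvl_r : lvl G r r = 0 := SimpleGraph.dist_self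

lemma lvl_eq_zero {v : V} (h : lvl G r v = 0) : v = r :=
  ((hG.dist_eq_zero_iff).mp h).symm ▸ rfl

lemma lvl_adj_le {u v : V} (h : G.Adj u v) : lvl G r v ≤ lvl G r u + 1 := by
  have h1 : G.dist u v ≤ 1 := SimpleGraph.dist_le (Walk.cons h Walk.nil)
  have h2 : G.dist r v ≤ G.dist r u + G.dist u v := hG.dist_triangle
  unfold lvl
  omega

/-- Adjacent vertices differ in depth by at most one: trichotomy. -/
lemma lvl_adj_cases {u v : V} (h : G.Adj u v) :
    lvl G r u = lvl G r v ∨ lvl G r u + 1 = lvl G r v ∨ lvl G r v + 1 = lvl G r u := by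
  have h1 := lvl_adj_le (r := r) hG h
  have h2 := lvl_adj_le (r := r) hG h.symm
  omega

/-- Every vertex of positive depth has a parent. -/
lemma exists_parent {v : V} {m : ℕ} (h : lvl G r v = m + 1) :
    ∃ u : V, G.Adj u v ∧ lvl G r u = m := by
  obtain ⟨p, hp⟩ := hG.exists_walk_length_eq_dist r v
  have hpl : p.length = m + 1 := by rw [hp]; exact h ▸ rfl
  rcases hrev : p.reverse with _ | ⟨hadj, q⟩
  · have := congrArg Walk.length hrev
    simp [Walk.length_reverse, hpl] at this
  · rename_i u
    have hql : q.length = m := by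
      have := congrArg Walk.length hrev
      simp only [Walk.length_reverse, hpl, Walk.length_cons] at this
      omega
    refine ⟨u, hadj.symm, ?_⟩
    have hle : G.dist r u ≤ m := by
      have := SimpleGraph.dist_le q.reverse
      rwa [Walk.length_reverse, hql] at this
    have hge : m ≤ G.dist r u := by
      have := lvl_adj_le (r := r) hG (show G.Adj u v from hadj.symm)
      unfold lvl at this h
      omega
    exact le_antisymm hle hge

/-- Ancestor walk: a walk to the root whose other vertices are strictly above. -/
lemma exists_anc_walk (v : V) :
    ∃ w : G.Walk v r, ∀ x ∈ w.support, x = v ∨ lvl G r x < lvl G r v := by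
  generalize hn : lvl G r v = n
  induction n generalizing v with
  | zero =>
    have := lvl_eq_zero hG hn
    subst this
    exact ⟨Walk.nil, by simp⟩
  | succ m ih =>
    obtain ⟨u, hadj, hu⟩ := exists_parent hG hn
    obtain ⟨w, hw⟩ := ih u hu
    refine ⟨Walk.cons hadj.symm w, ?_⟩
    intro x hx
    simp only [Walk.support_cons, List.mem_cons] at hx
    rcases hx with rfl | hx
    · exact Or.inl rfl
    · right
      rcases hw x hx with rfl | hlt
      · omega
      · omega

/-- There is a walk between any two vertices whose interior is strictly
below the levels of the endpoints. -/
lemma exists_upper_walk {u v : V} {m : ℕ} (hu : lvl G r u = m) (hv : lvl G r v = m) :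
    InW G ({z | lvl G r z < m} ∪ {u, v}) u v := by
  obtain ⟨w1, hw1⟩ := exists_anc_walk (r := r) hG u
  obtain ⟨w2, hw2⟩ := exists_anc_walk (r := r) hG v
  refine ⟨w1.append w2.reverse, ?_⟩
  intro x hx
  rw [Walk.mem_support_append_iff] at hx
  rcases hx with hx | hx
  · rcases hw1 x hx with rfl | h
    · right; left; rfl
    · left; simp only [Set.mem_setOf_eq]; omega
  · rw [Walk.support_reverse, List.mem_reverse] at hx
    rcases hw2 x hx with rfl | h
    · right; right; rfl
    · left; simp only [Set.mem_setOf_eq]; omega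

end Levels


section MainLemmas

variable {r : V} {k : ℕ}

lemma lemB' (hG : G.Connected) (hch : IsKChordal G k) (hk3 : 3 ≤ k) {m : ℕ} {x y y'' : V}
    (hy : lvl G r y = m + 1) (hx : lvl G r x = m) (hy'' : lvl G r y'' = m)
    (hadjy : G.Adj y'' y) (hne : x ≠ y'') (hnadj : ¬G.Adj x y'')
    (hconn : ∃ z, G.Adj x z ∧ InW G (Si G r (m + 1)) z y) :
    G.dist x y ≤ k - 1 := by
  classical
  by_cases hxy : G.Adj x y
  · have : G.dist x y ≤ 1 := SimpleGraph.dist_le (Walk.cons hxy Walk.nil)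
    omega
  -- lower region
  set W : Set V := Si G r (m + 1) ∪ {x} with hW
  have hxyW : InW G W x y := by
    obtain ⟨z, hxz, hzy⟩ := hconn
    exact (InW.adj hxz (Or.inr rfl) (Or.inl hzy.left_mem)).trans
      (hzy.mono (fun a ha => Or.inl ha))
  obtain ⟨P, hPs, hPpath, hPmin⟩ := hxyW.exists_min
  -- upper region
  set U : Set V := {z | lvl G r z < m} ∪ {x, y''} with hU
  have hxyU : InW G U x y'' := exists_upper_walk hG hx hy''
  obtain ⟨Q, hQs, hQpath, hQmin⟩ := hxyU.exists_min
  have hQ2 : 2 ≤ Q.length := by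
    rcases Nat.lt_or_ge Q.length 2 with h | h
    · interval_cases hql : Q.length
      · exact absurd (Walk.eq_of_length_eq_zero hql) hne
      · exact absurd (adj_of_len_one hql).1 hnadj
    · exact h
  -- first vertex of P adjacent to y''
  obtain ⟨c, P₁, P₂, hsplit, hPc, hfirst⟩ :=
    exists_first_split (P := fun z => G.Adj y'' z) P ⟨y, P.end_mem_support, hadjy⟩
  have hP1path : P₁.IsPath := by
    rw [hsplit] at hPpath
    exact hPpath.of_append_left
  have hP1sub : ∀ z ∈ P₁.support, z ∈ P.support := by
    intro z hz
    rw [hsplit, Walk.mem_support_append_iff]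
    exact Or.inl hz
  have hP1W : ∀ z ∈ P₁.support, z ∈ W := fun z hz => hPs z (hP1sub z hz)
  have hy''P1 : y'' ∉ P₁.support := by
    intro hmem
    rcases hP1W y'' hmem with h | h
    · have : m + 1 ≤ lvl G r y'' := h
      omega
    · exact hne (by simpa using h.symm)
  have hcx : c ≠ x := by
    rintro rfl
    exact hnadj hPc.symm
  -- the glued cycle
  set p : G.Walk x y'' := P₁.concat hPc.symm with hp
  have hppath : p.IsPath := IsPath.concat' hP1path _ hy''P1
  have hpsup : ∀ z, z ∈ p.support ↔ (z ∈ P₁.support ∨ z = y'') := by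
    intro z
    rw [hp, Walk.support_concat, List.mem_append]
    simp
  have hdisj : ∀ z, z ∈ p.support → z ∈ Q.support → z = x ∨ z = y'' := by
    intro z hzp hzq
    rcases (hpsup z).1 hzp with hz | rfl
    · rcases hP1W z hz with h | h
      · -- z has level ≥ m+1, but z ∈ U
        rcases hQs z hzq with h' | h'
        · exfalso
          have : lvl G r z < m := h'
          have : m + 1 ≤ lvl G r z := h
          omega
        · rcases h' with h' | h'
          · exact Or.inl h'
          · exact Or.inr h'
      · exact Or.inl h
    · exact Or.inr rfl
  have hZcyc : (p.append Q.reverse).IsCycle := glue_isCycle hppath hQpath hne hnadj hdisj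
  set Z : G.Walk x x := p.append Q.reverse with hZ
  -- the cycle is induced
  have hPnd := hPpath.support_nodup
  rw [hsplit, Walk.support_append] at hPnd
  have hZind : ∀ a ∈ Z.support, ∀ b ∈ Z.support, G.Adj a b → s(a, b) ∈ Z.edges := by
    have hmem : ∀ z ∈ Z.support, z ∈ P₁.support ∨ z ∈ Q.support := by
      intro z hz
      rw [hZ, Walk.mem_support_append_iff] at hz
      rcases hz with hz | hz
      · rcases (hpsup z).1 hz with h | rfl
        · exact Or.inl h
        · exact Or.inr Q.end_mem_support
      · rw [Walk.support_reverse, List.mem_reverse] at hz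
        exact Or.inr hz
    have hQedge : ∀ {a b : V}, s(a, b) ∈ Q.edges → s(a, b) ∈ Z.edges := by
      intro a b he
      rw [hZ, Walk.edges_append, List.mem_append, Walk.edges_reverse, List.mem_reverse]
      exact Or.inr he
    have hP1edge : ∀ {a b : V}, s(a, b) ∈ P₁.edges → s(a, b) ∈ Z.edges := by
      intro a b he
      rw [hZ, Walk.edges_append, List.mem_append]
      left
      rw [hp, Walk.edges_concat, List.concat_eq_append, List.mem_append]
      exact Or.inl he
    -- the middle edge
    have hmidedge : s(c, y'') ∈ Z.edges := by
      rw [hZ, Walk.edges_append, List.mem_append]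
      left
      rw [hp, Walk.edges_concat, List.concat_eq_append, List.mem_append]
      right; simp
    -- both-in-P₁ case
    have pp : ∀ a b : V, a ∈ P₁.support → b ∈ P₁.support → G.Adj a b → s(a, b) ∈ Z.edges := by
      intro a b haP hbP hab
      have he : s(a, b) ∈ P.edges :=
        chordfree P hPs hPmin (hP1sub a haP) (hP1sub b hbP) hab
      rw [hsplit, Walk.edges_append, List.mem_append] at he
      rcases he with he | he
      · exact hP1edge he
      · exfalso
        have hfa : a ∈ P₂.support := P₂.fst_mem_support_of_mem_edges he
        have hfb : b ∈ P₂.support := P₂.snd_mem_support_of_mem_edges he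
        have hdisj2 := (List.nodup_append.mp hPnd).2.2
        rw [P₂.support_eq_cons, List.mem_cons] at hfa hfb
        have ha2 : a = c := hfa.resolve_right (fun h => hdisj2 a haP a h rfl)
        have hb2 : b = c := hfb.resolve_right (fun h => hdisj2 b hbP b h rfl)
        rw [ha2, hb2] at hab
        exact G.irrefl hab
    -- main case analysis
    have key : ∀ a b : V, a ∈ P₁.support → b ∈ Q.support → b ∉ P₁.support →
        a ∉ Q.support → G.Adj a b → s(a, b) ∈ Z.edges := by
      intro a b ha hb hbP haQ hab
      have hax : a ≠ x := by rintro rfl; exact haQ Q.start_mem_support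
      have hbx : b ≠ x := by rintro rfl; exact hbP P₁.start_mem_support
      have hla : m + 1 ≤ lvl G r a := by
        rcases hP1W a ha with h | h
        · exact h
        · exact absurd h hax
      rcases hQs b hb with h' | h'
      · exfalso
        have hlb : lvl G r b < m := h'
        have := lvl_adj_le (r := r) hG hab.symm
        omega
      · rcases h' with h' | h'
        · exact absurd h' hbx
        · have hby : b = y'' := h'
          subst hby
          have : a = c := hfirst a ha hab.symm
          subst this
          exact hmidedge
    intro a ha b hb hab
    rcases hmem a ha with haP | haQ <;> rcases hmem b hb with hbP | hbQ
    · exact pp a b haP hbP hab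
    · by_cases hbP' : b ∈ P₁.support
      · exact pp a b haP hbP' hab
      · by_cases haQ' : a ∈ Q.support
        · exact hQedge (chordfree Q hQs hQmin haQ' hbQ hab)
        · exact key a b haP hbQ hbP' haQ' hab
    · by_cases haP' : a ∈ P₁.support
      · exact pp a b haP' hbP hab
      · by_cases hbQ' : b ∈ Q.support
        · exact hQedge (chordfree Q hQs hQmin haQ hbQ' hab)
        · rw [Sym2.eq_swap]
          exact key b a hbP haQ haP' hbQ' hab.symm
    · exact hQedge (chordfree Q hQs hQmin haQ hbQ hab)
  have hklen := hch x Z hZcyc (fun u hu v hv => hZind u hu v hv)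
  have hZlen : Z.length = P₁.length + 1 + Q.length := by
    rw [hZ, Walk.length_append, Walk.length_reverse, hp, Walk.length_concat]
  -- distance estimate
  have hd1 : G.dist x c ≤ P₁.length := SimpleGraph.dist_le P₁
  have hd2 : G.dist c y ≤ 2 := by
    have : G.dist c y ≤ (Walk.cons hPc.symm (Walk.cons hadjy Walk.nil) : G.Walk c y).length :=
      SimpleGraph.dist_le _
    simpa using this
  have htri : G.dist x y ≤ G.dist x c + G.dist c y := hG.dist_triangle
  omega


lemma lemC (hG : G.Connected) (hch : IsKChordal G k) (hk3 : 3 ≤ k) {m : ℕ} {x y : V}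
    (hx : lvl G r x = m + 1) (hy : lvl G r y = m + 1)
    (hconn : InW G (Si G r (m + 1)) x y) : G.dist x y ≤ k := by
  by_cases hxy : x = y
  · subst hxy; simp [SimpleGraph.dist_self]
  by_cases hadj : G.Adj x y
  · have : G.dist x y ≤ 1 := SimpleGraph.dist_le (Walk.cons hadj Walk.nil)
    omega
  obtain ⟨x', hx'adj, hx'⟩ := exists_parent hG hx
  obtain ⟨y', hy'adj, hy'⟩ := exists_parent hG hy
  by_cases hpeq : x' = y'
  · subst hpeq
    have : G.dist x y ≤ 2 := by
      have := SimpleGraph.dist_le (Walk.cons hx'adj.symm (Walk.cons hy'adj Walk.nil) : G.Walk x y)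
      simpa using this
    omega
  by_cases hpadj : G.Adj x' y'
  · have : G.dist x y ≤ 3 := by
      have := SimpleGraph.dist_le
        (Walk.cons hx'adj.symm (Walk.cons hpadj (Walk.cons hy'adj Walk.nil)) : G.Walk x y)
      simpa using this
    omega
  · have hB := lemB' (r := r) hG hch hk3 hy hx' hy' hy'adj hpeq hpadj ⟨x, hx'adj, hconn⟩
    have htri : G.dist x y ≤ G.dist x x' + G.dist x' y := hG.dist_triangle
    have hd1 : G.dist x x' ≤ 1 := SimpleGraph.dist_le (Walk.cons hx'adj.symm Walk.nil)
    omega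

/-- The bag distance lemma for `3 ≤ k`: any two vertices that are either in the
level-`i` part of a component of `Si i`, or neighbors of it one level up,
are at distance at most `k`. -/
lemma bagdist (hG : G.Connected) (hch : IsKChordal G k) (hk3 : 3 ≤ k) {i : ℕ} {w u v : V}
    (hu : (InW G (Si G r i) w u ∧ lvl G r u = i) ∨
      (lvl G r u + 1 = i ∧ ∃ z, G.Adj u z ∧ InW G (Si G r i) w z))
    (hv : (InW G (Si G r i) w v ∧ lvl G r v = i) ∨
      (lvl G r v + 1 = i ∧ ∃ z, G.Adj v z ∧ InW G (Si G r i) w z)) :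
    G.dist u v ≤ k := by
  -- auxiliary: mixed case
  have mixed : ∀ {i : ℕ} {w u v : V}, (InW G (Si G r i) w v ∧ lvl G r v = i) →
      (lvl G r u + 1 = i ∧ ∃ z, G.Adj u z ∧ InW G (Si G r i) w z) → G.dist u v ≤ k := by
    clear hu hv u v i w
    rintro i w u v ⟨hwv, hlv⟩ ⟨hlu, z, hadjz, hwz⟩
    obtain ⟨m, rfl⟩ : ∃ m, i = m + 1 := ⟨lvl G r u, hlu.symm⟩
    have hlu' : lvl G r u = m := by omega
    by_cases hadj : G.Adj u v
    · have : G.dist u v ≤ 1 := SimpleGraph.dist_le (Walk.cons hadj Walk.nil)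
      omega
    obtain ⟨y'', hy''adj, hy''⟩ := exists_parent hG hlv
    by_cases heq : u = y''
    · subst heq
      exact absurd hy''adj hadj
    by_cases hadj'' : G.Adj u y''
    · have : G.dist u v ≤ 2 := by
        have := SimpleGraph.dist_le (Walk.cons hadj'' (Walk.cons hy''adj Walk.nil) : G.Walk u v)
        simpa using this
      omega
    · have := lemB' (r := r) hG hch hk3 hlv hlu' hy'' hy''adj heq hadj''
        ⟨z, hadjz, (hwz.symm.trans hwv)⟩
      omega
  rcases hu with ⟨hwu, hlu⟩ | hu2
  · rcases hv with ⟨hwv, hlv⟩ | hv2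
    · -- both at level i
      rcases Nat.eq_zero_or_pos i with rfl | hipos
      · have h0u : lvl G r u = 0 := hlu
        have h0v : lvl G r v = 0 := hlv
        rw [lvl_eq_zero hG h0u, lvl_eq_zero hG h0v]
        simp [SimpleGraph.dist_self]
      · obtain ⟨m, rfl⟩ : ∃ m, i = m + 1 := ⟨i - 1, by omega⟩
        exact lemC (r := r) hG hch hk3 hlu hlv ((hwu.symm).trans hwv)
    · rw [SimpleGraph.dist_comm]
      exact mixed ⟨hwu, hlu⟩ hv2
  · rcases hv with ⟨hwv, hlv⟩ | hv2
    · exact mixed ⟨hwv, hlv⟩ hu2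
    · -- both one level up
      obtain ⟨hlu, zu, hadjzu, hwzu⟩ := hu2
      obtain ⟨hlv, zv, hadjzv, hwzv⟩ := hv2
      have hlveq : lvl G r v = lvl G r u := by omega
      rcases Nat.eq_zero_or_pos (lvl G r u) with h0 | hpos
      · rw [lvl_eq_zero hG h0, lvl_eq_zero hG (hlveq.trans h0)]
        simp [SimpleGraph.dist_self]
      · obtain ⟨m, hm⟩ : ∃ m, lvl G r u = m + 1 := ⟨lvl G r u - 1, by omega⟩
        obtain rfl : i = m + 2 := by omega
        -- u and v are connected within Si (m+1)
        have hSiu : u ∈ Si G r (m + 1) := by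
          show m + 1 ≤ lvl G r u; omega
        have hSiv : v ∈ Si G r (m + 1) := by
          show m + 1 ≤ lvl G r v; omega
        have hsub : Si G r (m + 2) ⊆ Si G r (m + 1) := by
          intro a ha
          have : m + 2 ≤ lvl G r a := ha
          show m + 1 ≤ lvl G r a; omega
        have hzu' : InW G (Si G r (m + 1)) u zu := by
          refine InW.adj hadjzu hSiu ?_
          exact hsub hwzu.right_mem
        have hzv' : InW G (Si G r (m + 1)) v zv := by
          refine InW.adj hadjzv hSiv ?_
          exact hsub hwzv.right_mem
        have hconn : InW G (Si G r (m + 1)) u v := by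
          have h1 : InW G (Si G r (m + 2)) zu zv := (hwzu.symm).trans hwzv
          exact (hzu'.trans (h1.mono hsub)).trans hzv'.symm
        exact lemC (r := r) hG hch hk3 hm (by omega) hconn

end MainLemmas

section Acyclic

lemma length_rotate' [DecidableEq V] {u v : V} {c : G.Walk v v} (h : u ∈ c.support) :
    (c.rotate u h).length = c.length := by
  have h1 := congrArg Walk.length (c.take_spec h)
  rw [Walk.length_append] at h1
  have h2 : c.rotate u h = (c.dropUntil u h).append (c.takeUntil u h) := rfl
  rw [h2, Walk.length_append]
  omega

lemma mem_support_rotate_iff [DecidableEq V] {u v w : V} {c : G.Walk v v} (h : u ∈ c.support) :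
    w ∈ (c.rotate u h).support ↔ w ∈ c.support := by
  have hr : c.rotate u h = (c.dropUntil u h).append (c.takeUntil u h) := rfl
  rw [hr, Walk.mem_support_append_iff]
  conv_rhs => rw [← c.take_spec h]
  rw [Walk.mem_support_append_iff]
  tauto

/-- Shrinking a cycle with a chord. -/
lemma cycle_shrink [DecidableEq V] {u w : V} (c' : G.Walk u u) (hc' : c'.IsCycle) (hw : w ∈ c'.support)
    (hwu : w ≠ u) (hadj : G.Adj u w) (hne : s(u, w) ∉ c'.edges) :
    ∃ e : G.Walk u u, e.IsCycle ∧ e.length < c'.length := by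
  cases c' with
  | nil => exact absurd hc' (Walk.IsCycle.not_of_nil)
  | @cons _ b _ h t =>
    have hcyc := (Walk.cons_isCycle_iff t h).mp hc'
    have hwt : w ∈ t.support := by
      have h0 : w ∈ u :: t.support := by simpa using hw
      rw [List.mem_cons] at h0
      exact h0.resolve_left hwu
    have hwb : w ≠ b := by
      rintro rfl
      exact hne (by simp)
    set w₁ := t.takeUntil w hwt with hw₁
    set w₂ := t.dropUntil w hwt with hw₂
    have hlsplit : w₁.length + w₂.length = t.length := by
      have := congrArg Walk.length (t.take_spec hwt)
      rwa [Walk.length_append] at this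
    have hund : u ∉ w₁.support := by
      have hnd := hcyc.1.support_nodup
      rw [← t.take_spec hwt, Walk.support_append] at hnd
      have hdisj := (List.nodup_append.mp hnd).2.2
      intro humem
      have hu2 : u ∈ w₂.support := w₂.end_mem_support
      rw [w₂.support_eq_cons, List.mem_cons] at hu2
      rcases hu2 with h' | h'
      · exact hwu h'.symm
      · exact hdisj u humem u h' rfl
    have hw1path : w₁.IsPath := hcyc.1.takeUntil hwt
    have hccat : (w₁.concat hadj.symm).IsPath := IsPath.concat' hw1path hadj.symm hund
    refine ⟨Walk.cons h (w₁.concat hadj.symm), ?_, ?_⟩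
    · rw [Walk.cons_isCycle_iff]
      refine ⟨hccat, ?_⟩
      rw [Walk.edges_concat, List.concat_eq_append, List.mem_append]
      rintro (h' | h')
      · exact hcyc.2 ((t.edges_takeUntil_subset hwt) h')
      · rw [List.mem_singleton, Sym2.eq_iff] at h'
        rcases h' with ⟨h1, h2⟩ | ⟨h1, h2⟩
        · exact hwu h1.symm
        · exact hwb h2.symm
    · have hw2len : 2 ≤ w₂.length := by
        rcases Nat.lt_or_ge w₂.length 2 with hlt | hge
        · interval_cases hl : w₂.length
          · exact absurd (Walk.eq_of_length_eq_zero hl) hwu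
          · exfalso
            have := (adj_of_len_one hl).2
            apply hne
            have : s(w, u) ∈ w₂.edges := by rw [this]; simp
            have : s(w, u) ∈ t.edges := (t.edges_dropUntil_subset hwt) this
            rw [Sym2.eq_swap]
            exact List.mem_cons_of_mem _ this
        · exact hge
      simp only [Walk.length_cons, Walk.length_concat]
      omega

lemma acyclic_of_chordal_le_two {k : ℕ} (hch : IsKChordal G k) (hk2 : k ≤ 2) :
    G.IsAcyclic := by
  classical
  intro v c hc
  have hex : ∃ n, ∃ (a : V) (d : G.Walk a a), d.IsCycle ∧ d.length = n :=
    ⟨c.length, v, c, hc, rfl⟩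
  obtain ⟨a, d, hd, hdl⟩ := Nat.find_spec hex
  have hind : ∀ u ∈ d.support, ∀ w ∈ d.support, G.Adj u w → s(u, w) ∈ d.edges := by
    by_contra hcon
    push_neg at hcon
    obtain ⟨u, hu, w, hw, hadj, hne⟩ := hcon
    have hc' : (d.rotate u hu).IsCycle := hd.rotate hu
    have hw' : w ∈ (d.rotate u hu).support := by
      rw [_root_.mem_support_rotate_iff]
      exact hw
    have hne' : s(u, w) ∉ (d.rotate u hu).edges := by
      rw [(d.rotate_edges u hu).mem_iff]
      exact hne
    obtain ⟨e, he, helen⟩ := cycle_shrink (d.rotate u hu) hc' hw' (hadj.ne.symm) hadj hne'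
    rw [length_rotate' hu, hdl] at helen
    have hfind : Nat.find hex ≤ e.length :=
      Nat.find_le ⟨u, e, he, rfl⟩
    omega
  have hlen := hch a d hd hind
  have := hd.three_le_length
  omega

end Acyclic

section AcyclicBags

variable {r : V} (hG : G.Connected) (hac : G.IsAcyclic)
include hG

/-- On a geodesic from the root, levels increase along the walk. -/
lemma geodesic_lvl {v z : V} (p : G.Walk r v) (hp : p.length = lvl G r v)
    (hz : z ∈ p.support) (hzv : z ≠ v) : lvl G r z < lvl G r v := by
  classical
  have hsplit : (p.takeUntil z hz).length + (p.dropUntil z hz).length = p.length := by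
    have := congrArg Walk.length (p.take_spec hz)
    rwa [Walk.length_append] at this
  have h1 : lvl G r z ≤ (p.takeUntil z hz).length := SimpleGraph.dist_le _
  have h2 : G.dist z v ≤ (p.dropUntil z hz).length := SimpleGraph.dist_le _
  have h3 : lvl G r v ≤ lvl G r z + G.dist z v := hG.dist_triangle
  have h4 : (p.dropUntil z hz).length ≠ 0 := by
    intro h0
    exact hzv (Walk.eq_of_length_eq_zero h0)
  unfold lvl at *
  omega

include hac

/-- In an acyclic graph, adjacent vertices are on different levels. -/
lemma acyclic_adj_lvl {u v : V} (hadj : G.Adj u v) : lvl G r u ≠ lvl G r v := by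
  intro heq
  obtain ⟨p, hp⟩ := hG.exists_walk_length_eq_dist r u
  obtain ⟨q, hq⟩ := hG.exists_walk_length_eq_dist r v
  have hppath : p.IsPath := p.isPath_of_length_eq_dist hp
  have hqpath : q.IsPath := q.isPath_of_length_eq_dist hq
  have hunp : u ∉ q.support := by
    intro hu
    by_cases huv : u = v
    · exact hadj.ne huv
    · have := geodesic_lvl hG q hq hu huv
      unfold lvl at this heq
      omega
  have hq2path : (q.concat hadj.symm).IsPath := IsPath.concat' hqpath hadj.symm hunp
  have := hac.path_unique ⟨p, hppath⟩ ⟨q.concat hadj.symm, hq2path⟩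
  have hlen := congrArg (fun w : G.Path r u => (w : G.Walk r u).length) this
  simp only [Walk.length_concat] at hlen
  unfold lvl at heq
  omega

/-- In an acyclic graph, two distinct vertices on the same level cannot be
connected below that level. -/
lemma acyclic_no_same_level {i : ℕ} {x y : V} (hxy : x ≠ y) (hx : lvl G r x = i)
    (hy : lvl G r y = i) (hconn : InW G (Si G r i) x y) : False := by
  have hnadj : ¬G.Adj x y := fun h => acyclic_adj_lvl hG hac h (hx.trans hy.symm)
  obtain ⟨p, hps, hppath, hpmin⟩ := hconn.exists_min
  have hp2 : 2 ≤ p.length := by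
    rcases Nat.lt_or_ge p.length 2 with h | h
    · interval_cases hl : p.length
      · exact absurd (Walk.eq_of_length_eq_zero hl) hxy
      · exact absurd (adj_of_len_one hl).1 hnadj
    · exact h
  classical
  obtain ⟨w, hw⟩ := exists_upper_walk (r := r) hG hx hy
  set q := w.toPath with hq
  have hquniq := hac.path_unique ⟨p, hppath⟩ q
  -- second vertex of p
  cases p with
  | nil => simp at hp2
  | @cons _ b _ h t =>
    have hbp : b ∈ (Walk.cons h t).support := by simp
    have hbSi : b ∈ Si G r i := hps b hbp
    have hbx : b ≠ x := by
      rintro rfl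
      exact G.irrefl h
    have hby : b ≠ y := by
      rintro rfl
      have : t = Walk.nil := Walk.isPath_iff_eq_nil.mp hppath.of_cons
      subst this
      simp at hp2
    have hbq : b ∈ (q : G.Walk x y).support := by
      have : (Walk.cons h t) = (q : G.Walk x y) := congrArg Subtype.val hquniq
      rw [← this]
      simp
    have := Walk.support_toPath_subset w hbq
    have := hw b this
    rcases this with h' | h'
    · have hlt : lvl G r b < i := h'
      have hge : i ≤ lvl G r b := hbSi
      omega
    · rcases h' with h' | h'
      · exact hbx h'
      · exact hby h'

/-- In an acyclic graph, a vertex has at most one neighbour on the previous level. -/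
lemma acyclic_parent_unique {m : ℕ} {u₁ u₂ v : V} (h1 : G.Adj u₁ v) (h2 : G.Adj u₂ v)
    (hl1 : lvl G r u₁ = m) (hl2 : lvl G r u₂ = m) (hlv : lvl G r v = m + 1) :
    u₁ = u₂ := by
  obtain ⟨p, hp⟩ := hG.exists_walk_length_eq_dist r u₁
  obtain ⟨q, hq⟩ := hG.exists_walk_length_eq_dist r u₂
  have hppath : p.IsPath := p.isPath_of_length_eq_dist hp
  have hqpath : q.IsPath := q.isPath_of_length_eq_dist hq
  have hvp : v ∉ p.support := by
    intro hv
    by_cases hvu : v = u₁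
    · subst hvu; omega
    · have := geodesic_lvl hG p hp hv hvu
      unfold lvl at this; unfold lvl at hl1 hlv
      omega
  have hvq : v ∉ q.support := by
    intro hv
    by_cases hvu : v = u₂
    · subst hvu; omega
    · have := geodesic_lvl hG q hq hv hvu
      unfold lvl at this; unfold lvl at hl2 hlv
      omega
  have hp2 : (p.concat h1).IsPath := IsPath.concat' hppath h1 hvp
  have hq2 : (q.concat h2).IsPath := IsPath.concat' hqpath h2 hvq
  have hequ := hac.path_unique ⟨p.concat h1, hp2⟩ ⟨q.concat h2, hq2⟩
  have heqw : p.concat h1 = q.concat h2 := congrArg Subtype.val hequ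
  have hgv := congrArg (fun w : G.Walk r v => w.reverse.getVert 1) heqw
  simp only [Walk.reverse_concat, Walk.getVert_cons _ _ one_ne_zero, Nat.sub_self, Walk.getVert_zero] at hgv
  exact hgv

end AcyclicBags

section Rep

variable [Fintype V]

/-- Canonical representative of the connected component of `v` within `Si G r i`. -/
noncomputable def rep (G : SimpleGraph V) (r : V) (i : ℕ) (v : V) : V := by
  classical
  exact if h : ∃ n : ℕ, ∃ w : V, InW G (Si G r i) v w ∧ (Fintype.equivFin V w : ℕ) = n then
    (Fintype.equivFin V).symm ⟨Nat.find h, by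
      obtain ⟨w, hw, hn⟩ := Nat.find_spec h
      rw [← hn]
      exact (Fintype.equivFin V w).2⟩
  else v

lemma rep_conn {r : V} {i : ℕ} {v : V} (hv : v ∈ Si G r i) :
    InW G (Si G r i) v (rep G r i v) := by
  classical
  rw [rep]
  have h : ∃ n : ℕ, ∃ w : V, InW G (Si G r i) v w ∧ (Fintype.equivFin V w : ℕ) = n :=
    ⟨_, v, InW.refl hv, rfl⟩
  rw [dif_pos h]
  obtain ⟨w, hw, hn⟩ := Nat.find_spec h
  have key : ∀ hlt : Nat.find h < Fintype.card V,
      (Fintype.equivFin V).symm ⟨Nat.find h, hlt⟩ = w := by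
    intro hlt
    rw [Equiv.symm_apply_eq]
    exact Fin.ext (by rw [hn])
  rw [key]
  exact hw

lemma rep_eq {r : V} {i : ℕ} {v v' : V} (h : InW G (Si G r i) v v') :
    rep G r i v = rep G r i v' := by
  classical
  have hiff : ∀ n : ℕ, (∃ w : V, InW G (Si G r i) v w ∧ (Fintype.equivFin V w : ℕ) = n) ↔
      (∃ w : V, InW G (Si G r i) v' w ∧ (Fintype.equivFin V w : ℕ) = n) := by
    intro n
    constructor
    · rintro ⟨w, hw, hn⟩; exact ⟨w, h.symm.trans hw, hn⟩
    · rintro ⟨w, hw, hn⟩; exact ⟨w, h.trans hw, hn⟩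
  rw [rep, rep]
  have h1 : ∃ n : ℕ, ∃ w : V, InW G (Si G r i) v w ∧ (Fintype.equivFin V w : ℕ) = n :=
    ⟨_, v', h, rfl⟩
  have h2 : ∃ n : ℕ, ∃ w : V, InW G (Si G r i) v' w ∧ (Fintype.equivFin V w : ℕ) = n :=
    ⟨_, v', InW.refl h.right_mem, rfl⟩
  rw [dif_pos h1, dif_pos h2]
  have : Nat.find h1 = Nat.find h2 := by
    apply le_antisymm
    · exact Nat.find_le ((hiff _).mpr (Nat.find_spec h2))
    · exact Nat.find_le ((hiff _).mp (Nat.find_spec h1))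
  congr 1
  exact Fin.ext this

lemma rep_idem {r : V} {i : ℕ} {v : V} (hv : v ∈ Si G r i) :
    rep G r i (rep G r i v) = rep G r i v :=
  (rep_eq (rep_conn hv)).symm

end Rep

section AcyclicBagDist

variable {r : V}

lemma bagdist_acyclic (hG : G.Connected) (hac : G.IsAcyclic) {i : ℕ} {w u v : V}
    (hu : (InW G (Si G r i) w u ∧ lvl G r u = i) ∨
      (lvl G r u + 1 = i ∧ ∃ z, G.Adj u z ∧ InW G (Si G r i) w z))
    (hv : (InW G (Si G r i) w v ∧ lvl G r v = i) ∨
      (lvl G r v + 1 = i ∧ ∃ z, G.Adj v z ∧ InW G (Si G r i) w z)) :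
    G.dist u v ≤ 1 := by
  have uniq : ∀ {a b : V}, (InW G (Si G r i) w a ∧ lvl G r a = i) →
      (InW G (Si G r i) w b ∧ lvl G r b = i) → a = b := by
    rintro a b ⟨hwa, hla⟩ ⟨hwb, hlb⟩
    by_contra hne
    exact acyclic_no_same_level hG hac hne hla hlb (hwa.symm.trans hwb)
  have norm2 : ∀ {a : V}, (lvl G r a + 1 = i ∧ ∃ z, G.Adj a z ∧ InW G (Si G r i) w z) →
      ∃ z, G.Adj a z ∧ (InW G (Si G r i) w z ∧ lvl G r z = i) ∧ lvl G r a + 1 = i := by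
    rintro a ⟨hla, z, hadj, hwz⟩
    refine ⟨z, hadj, ⟨hwz, ?_⟩, hla⟩
    have h1 : i ≤ lvl G r z := hwz.right_mem
    have h2 := lvl_adj_le (r := r) hG hadj
    omega
  rcases hu with hu1 | hu2
  · rcases hv with hv1 | hv2
    · rw [uniq hu1 hv1]
      simp [SimpleGraph.dist_self]
    · obtain ⟨z, hadj, hz1, _⟩ := norm2 hv2
      rw [uniq hu1 hz1] at *
      rw [SimpleGraph.dist_comm]
      exact SimpleGraph.dist_le (Walk.cons hadj Walk.nil)
  · rcases hv with hv1 | hv2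
    · obtain ⟨z, hadj, hz1, _⟩ := norm2 hu2
      rw [uniq hv1 hz1] at *
      exact SimpleGraph.dist_le (Walk.cons hadj Walk.nil)
    · obtain ⟨zu, hadju, hzu1, hlu⟩ := norm2 hu2
      obtain ⟨zv, hadjv, hzv1, hlv⟩ := norm2 hv2
      have hzz : zu = zv := uniq hzu1 hzv1
      subst hzz
      have : u = v := acyclic_parent_unique (m := lvl G r u) hG hac hadju hadjv rfl
        (by omega) (by omega)
      rw [this]
      simp [SimpleGraph.dist_self]

end AcyclicBagDist

/-- Every `k`-chordal graph has treelength at most `k`: a connected graph with no induced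
cycle of length at least `k+1` admits a tree decomposition in which any two vertices
sharing a bag are at distance at most `k`. -/
theorem stmt10 {V : Type} [Fintype V] (G : SimpleGraph V) (hG : G.Connected)
    (k : ℕ) (hk : 1 ≤ k) (hch : IsKChordal G k) :
    ∃ (ι : Type) (T : SimpleGraph ι) (B : ι → Set V),
      T.IsTree ∧
      (∀ v : V, ∃ t, v ∈ B t) ∧
      (∀ v : V, (T.induce {t | v ∈ B t}).Connected) ∧
      (∀ u v : V, G.Adj u v → ∃ t, u ∈ B t ∧ v ∈ B t) ∧
      (∀ t, ∀ u ∈ B t, ∀ v ∈ B t, G.dist u v ≤ k) := by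
  classical
  obtain ⟨r⟩ := hG.nonempty
  let ι : Type := {p : ℕ × V // p.2 ∈ Si G r p.1 ∧ rep G r p.1 p.2 = p.2}
  let T : SimpleGraph ι := SimpleGraph.fromRel
    (fun s t => s.1.1 = t.1.1 + 1 ∧ InW G (Si G r t.1.1) t.1.2 s.1.2)
  let B : ι → Set V := fun t =>
    {z | InW G (Si G r t.1.1) t.1.2 z ∧ lvl G r z = t.1.1} ∪
    {z | lvl G r z + 1 = t.1.1 ∧ ∃ y, G.Adj z y ∧ InW G (Si G r t.1.1) t.1.2 y}
  have hTadj : ∀ s t : ι, T.Adj s t ↔ s ≠ t ∧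
      ((s.1.1 = t.1.1 + 1 ∧ InW G (Si G r t.1.1) t.1.2 s.1.2) ∨
       (t.1.1 = s.1.1 + 1 ∧ InW G (Si G r s.1.1) s.1.2 t.1.2)) := by
    intro s t
    exact SimpleGraph.fromRel_adj _ s t
  have hBmem : ∀ (t : ι) (z : V), z ∈ B t ↔
      ((InW G (Si G r t.1.1) t.1.2 z ∧ lvl G r z = t.1.1) ∨
       (lvl G r z + 1 = t.1.1 ∧ ∃ y, G.Adj z y ∧ InW G (Si G r t.1.1) t.1.2 y)) := by
    intro t z
    rfl
  have hmemSi : ∀ {i : ℕ} {v : V}, i ≤ lvl G r v → v ∈ Si G r i := fun h => h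
  have hSimono : ∀ {i j : ℕ}, i ≤ j → Si G r j ⊆ Si G r i := by
    intro i j hij a ha
    exact hmemSi (le_trans hij ha)
  let nd : ∀ (i : ℕ) (v : V), v ∈ Si G r i → ι := fun i v hv =>
    ⟨(i, rep G r i v), (rep_conn hv).right_mem, rep_idem hv⟩
  have hnd1 : ∀ (i : ℕ) (v : V) (hv : v ∈ Si G r i), (nd i v hv).1.1 = i := fun _ _ _ => rfl
  have hndB : ∀ (v : V), v ∈ B (nd (lvl G r v) v (hmemSi le_rfl)) := by
    intro v
    rw [hBmem]
    exact Or.inl ⟨(rep_conn (hmemSi le_rfl)).symm, rfl⟩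
  refine ⟨ι, T, B, ⟨?_, ?_⟩, ?_, ?_, ?_, ?_⟩
  · -- T connected
    have hroot : r ∈ Si G r 0 := hmemSi (Nat.zero_le _)
    set root : ι := nd 0 r hroot with hrootdef
    have key : ∀ (i : ℕ) (t : ι), t.1.1 = i → T.Reachable t root := by
      intro i
      induction i using Nat.strong_induction_on with
      | _ i IH =>
        intro t ht
        rcases t with ⟨⟨i', w⟩, hmemw, hidw⟩
        simp only at ht
        subst ht
        rcases Nat.eq_zero_or_pos i' with rfl | hpos
        · have hconn0 : InW G (Si G r 0) r w := by
            obtain ⟨p⟩ := hG.preconnected r w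
            exact ⟨p, fun z _ => hmemSi (Nat.zero_le _)⟩
          have : w = rep G r 0 r := by
            rw [rep_eq hconn0]
            exact hidw.symm
          have : (⟨(0, w), hmemw, hidw⟩ : ι) = root := by
            apply Subtype.ext
            simp only [hrootdef]
            rw [this]
          rw [this]
        · obtain ⟨j, rfl⟩ : ∃ j, i' = j + 1 := ⟨i' - 1, by omega⟩
          have hwj : w ∈ Si G r j := hSimono (by omega) hmemw
          have hadj : T.Adj ⟨(j + 1, w), hmemw, hidw⟩ (nd j w hwj) := by
            rw [hTadj]
            constructor
            · intro hh
              have := congrArg (fun t : ι => t.1.1) hh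
              simp [nd] at this
            · exact Or.inl ⟨rfl, (rep_conn hwj).symm⟩
          exact hadj.reachable.trans (IH j (by omega) (nd j w hwj) rfl)
    rw [SimpleGraph.connected_iff]
    exact ⟨fun a b => (key _ a rfl).trans (key _ b rfl).symm, ⟨root⟩⟩
  · -- T acyclic
    intro t₀ c hc
    obtain ⟨m, hm_mem, hmax⟩ := Finset.exists_max_image c.support.toFinset
      (fun t : ι => t.1.1) (by
        rw [List.toFinset_nonempty_iff]
        exact c.support_ne_nil)
    rw [List.mem_toFinset] at hm_mem
    have hc' : (c.rotate m hm_mem).IsCycle := hc.rotate hm_mem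
    have hmax' : ∀ z ∈ (c.rotate m hm_mem).support, z.1.1 ≤ m.1.1 := by
      intro z hz
      exact hmax z (by rw [List.mem_toFinset]; rwa [_root_.mem_support_rotate_iff] at hz)
    set c' := c.rotate m hm_mem with hc'def
    obtain ⟨b, hadjb, t, hconsdef⟩ := Walk.not_nil_iff.mp hc'.not_nil
    have hcyc := (Walk.cons_isCycle_iff t hadjb).mp (hconsdef ▸ hc')
    have hlen3 := hc'.three_le_length
    rw [hconsdef] at hlen3
    simp only [Walk.length_cons] at hlen3
    have htrevnil : ¬t.reverse.Nil := by
      rw [Walk.nil_iff_length_eq, Walk.length_reverse]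
      omega
    obtain ⟨b', hadjb', t2, htrevdef⟩ := Walk.not_nil_iff.mp htrevnil
    have htrevpath : t.reverse.IsPath := hcyc.1.reverse
    have hbb' : b' ≠ b := by
      rintro rfl
      rw [htrevdef] at htrevpath
      have ht2 : t2 = Walk.nil := Walk.isPath_iff_eq_nil.mp htrevpath.of_cons
      rw [ht2] at htrevdef
      have : t.reverse.length = 1 := by rw [htrevdef]; simp
      rw [Walk.length_reverse] at this
      omega
    -- membership of b and b' in c'.support
    have hbmem : b ∈ c'.support := by
      rw [hconsdef]; simp
    have hb'mem : b' ∈ c'.support := by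
      rw [hconsdef]
      simp only [Walk.support_cons, List.mem_cons]
      right
      have : b' ∈ t.reverse.support := by rw [htrevdef]; simp
      rwa [Walk.support_reverse, List.mem_reverse] at this
    -- adjacency analysis
    have hup : ∀ {z : ι}, T.Adj m z → z ∈ c'.support →
        m.1.1 = z.1.1 + 1 ∧ InW G (Si G r z.1.1) z.1.2 m.1.2 := by
      intro z hadj hzmem
      rw [hTadj] at hadj
      rcases hadj.2 with h | h
      · exact h
      · exfalso
        have := hmax' z hzmem
        omega
    have hb := hup hadjb hbmem
    have hb' := hup (by
      have : T.Adj m b' := by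
        have : t.reverse = Walk.cons hadjb' t2 := htrevdef
        exact hadjb'
      exact this) hb'mem
    have hlvlbb' : b.1.1 = b'.1.1 := by omega
    have hconnbb' : InW G (Si G r b.1.1) b.1.2 b'.1.2 := by
      refine (hb.2).trans ?_
      rw [hlvlbb']
      exact (hb'.2).symm
    have hrepb : rep G r b.1.1 b.1.2 = b.1.2 := b.2.2
    have hrepb' : rep G r b'.1.1 b'.1.2 = b'.1.2 := b'.2.2
    apply hbb'
    apply Subtype.ext
    have h2 : b.1.2 = b'.1.2 := by
      rw [← hrepb, ← hrepb', ← hlvlbb']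
      exact rep_eq hconnbb'
    have : b.1 = b'.1 := Prod.ext hlvlbb' h2
    exact this.symm
  · -- vertex coverage
    intro v
    exact ⟨nd (lvl G r v) v (hmemSi le_rfl), hndB v⟩
  · -- connectivity of bags containing v
    intro v
    apply induce_connected_of_hub T _ (nd (lvl G r v) v (hmemSi le_rfl)) (hndB v)
    intro t ht
    have hv := (hBmem t v).mp ht
    rcases hv with ⟨hwv, hlv⟩ | ⟨hlv, y, hadjy, hwy⟩
    · left
      rcases t with ⟨⟨i, w⟩, hmemw, hidw⟩
      simp only at hwv hlv
      apply Subtype.ext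
      subst hlv
      have : w = rep G r (lvl G r v) v := by
        rw [← rep_eq hwv]
        exact hidw.symm
      simp only [nd]
      rw [this]
    · right
      rw [hTadj]
      constructor
      · intro hh
        have := congrArg (fun t : ι => t.1.1) hh
        simp only [nd] at this
        omega
      · left
        refine ⟨by simp only [nd]; omega, ?_⟩
        simp only [nd]
        have h1 : InW G (Si G r (lvl G r v)) (rep G r (lvl G r v) v) v :=
          (rep_conn (hmemSi le_rfl)).symm
        have h2 : InW G (Si G r (lvl G r v)) v y := by
          refine InW.adj hadjy (hmemSi le_rfl) ?_
          exact hSimono (by omega) hwy.right_mem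
        have h3 : InW G (Si G r (lvl G r v)) y t.1.2 :=
          (hwy.symm).mono (hSimono (by omega))
        exact (h1.trans h2).trans h3
  · -- edge coverage
    intro u v hadj
    rcases lvl_adj_cases (r := r) hG hadj with heq | heq | heq
    · refine ⟨nd (lvl G r u) u (hmemSi le_rfl), hndB u, ?_⟩
      rw [hBmem]
      left
      refine ⟨?_, heq.symm⟩
      exact (rep_conn (hmemSi le_rfl)).symm.trans
        (InW.adj hadj (hmemSi le_rfl) (hmemSi (by omega)))
    · refine ⟨nd (lvl G r v) v (hmemSi le_rfl), ?_, hndB v⟩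
      rw [hBmem]
      right
      exact ⟨heq, v, hadj, (rep_conn (hmemSi le_rfl)).symm⟩
    · refine ⟨nd (lvl G r u) u (hmemSi le_rfl), hndB u, ?_⟩
      rw [hBmem]
      right
      exact ⟨heq, u, hadj.symm, (rep_conn (hmemSi le_rfl)).symm⟩
  · -- distance bound
    intro t u hu v hv
    have hu' := (hBmem t u).mp hu
    have hv' := (hBmem t v).mp hv
    by_cases hk3 : 3 ≤ k
    · exact bagdist (r := r) hG hch hk3 hu' hv'
    · have hac := acyclic_of_chordal_le_two hch (by omega)
      have := bagdist_acyclic (r := r) hG hac hu' hv'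
      omega

end TreelengthProof
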